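/- For every integer k ≥ 1, M_k is the supremum over x ∈ (0, π) of the likelihood ratio f_k(x)/g_k(x), and this supremum is attained at x = π/2; that is, f_k(x)/g_k(x) ≤ f_k(π/2)/g_k(π/2) = M_k for all x ∈ (0, π). -/

import Mathlib

open Real

lemma sin_lower (u : ℝ) (h0 : 0 ≤ u) (h1 : u ≤ π / 4) :
    Real.sqrt 2 * 2 / π * u ≤ Real.sin u := by
  have hπ := Real.pi_pos
  have ha : (0:ℝ) ≤ 1 - 4 * u / π := by
    rw [sub_nonneg, div_le_one hπ]; linarith
  have hb : (0:ℝ) ≤ 4 * u / π := by positivity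
  have hab : (1 - 4 * u / π) + 4 * u / π = 1 := by ring
  have key := strictConcaveOn_sin_Icc.concaveOn.2 (Set.mem_Icc.2 ⟨le_rfl, hπ.le⟩)
    (show (π/4:ℝ) ∈ Set.Icc 0 π from Set.mem_Icc.2 ⟨by positivity, by linarith⟩) ha hb hab
  simp only [smul_eq_mul, mul_zero, zero_add] at key
  rw [show (4 * u / π) * (π / 4) = u by field_simp] at key
  rw [Real.sin_zero, Real.sin_pi_div_four] at key
  have h2 : Real.sqrt 2 * 2 / π * u = (1 - 4 * u / π) * 0 + 4 * u / π * (Real.sqrt 2 / 2) := by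
    field_simp; ring
  linarith [key]

lemma sin_le_quad (x : ℝ) (h0 : 0 ≤ x) (h1 : x ≤ π) :
    Real.sin x * π ^ 2 ≤ 4 * (x * (π - x)) := by
  have hπ := Real.pi_pos
  set t := x - π / 2 with ht
  have hsin : Real.sin x = Real.cos t := by
    rw [show x = t + π / 2 by ring, Real.sin_add_pi_div_two]
  have habs : |t| ≤ π / 2 := by rw [abs_le]; constructor <;> simp only [ht] <;> linarith
  have hlow := sin_lower (|t| / 2) (by positivity) (by linarith)
  have hpyth := Real.sin_sq_add_cos_sq (t / 2)
  have hcos : Real.cos t = 1 - 2 * Real.sin (t / 2) ^ 2 := by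
    have h := Real.cos_two_mul' (t / 2)
    rw [show 2 * (t / 2) = t by ring] at h
    linarith
  have hsq : Real.sin (t / 2) ^ 2 = Real.sin (|t| / 2) ^ 2 := by
    rcases abs_cases t with ⟨h, _⟩ | ⟨h, _⟩
    · rw [h]
    · rw [h, show -t / 2 = -(t/2) by ring, Real.sin_neg]; ring
  have hsl : (Real.sqrt 2 * 2 / π * (|t| / 2)) ^ 2 ≤ Real.sin (|t| / 2) ^ 2 :=
    pow_le_pow_left₀ (by positivity) hlow 2
  have hexp : (Real.sqrt 2 * 2 / π * (|t| / 2)) ^ 2 = 2 * t ^ 2 / π ^ 2 := by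
    have h2 : Real.sqrt 2 ^ 2 = 2 := Real.sq_sqrt (by norm_num)
    have : (Real.sqrt 2 * 2 / π * (|t| / 2)) ^ 2 = Real.sqrt 2 ^ 2 * |t| ^ 2 / π ^ 2 := by
      ring
    rw [this, h2, sq_abs]
  have hkey : 2 * t ^ 2 / π ^ 2 ≤ Real.sin (t / 2) ^ 2 := by
    rw [hsq]; linarith [hexp ▸ hsl]
  have hkey2 : 2 * t ^ 2 ≤ Real.sin (t / 2) ^ 2 * π ^ 2 := by
    rw [div_le_iff₀ (by positivity)] at hkey; linarith
  have hx : x * (π - x) = π ^ 2 / 4 - t ^ 2 := by simp only [ht]; ring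
  rw [hsin, hcos, hx]
  nlinarith [hkey2]

theorem ratio_sup_attained_at_half_pi (k : ℕ) (hk : 1 ≤ k) :
    (∀ x ∈ Set.Ioo (0 : ℝ) π,
        ((Gamma ((k : ℝ) / 2 + 1) / (Real.sqrt π * Gamma ((k : ℝ) / 2 + 1 / 2))) *
              Real.sin x ^ k) /
            (x ^ k * (π - x) ^ k /
              ((Gamma ((k : ℝ) + 1) * Gamma ((k : ℝ) + 1) /
                  Gamma ((k : ℝ) + 1 + ((k : ℝ) + 1))) * π ^ (2 * k + 1))) ≤
          ((Gamma ((k : ℝ) / 2 + 1) / (Real.sqrt π * Gamma ((k : ℝ) / 2 + 1 / 2))) *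
              Real.sin (π / 2) ^ k) /
            ((π / 2) ^ k * (π - π / 2) ^ k /
              ((Gamma ((k : ℝ) + 1) * Gamma ((k : ℝ) + 1) /
                  Gamma ((k : ℝ) + 1 + ((k : ℝ) + 1))) * π ^ (2 * k + 1)))) ∧
      ((Gamma ((k : ℝ) / 2 + 1) / (Real.sqrt π * Gamma ((k : ℝ) / 2 + 1 / 2))) *
            Real.sin (π / 2) ^ k) /
          ((π / 2) ^ k * (π - π / 2) ^ k /
            ((Gamma ((k : ℝ) + 1) * Gamma ((k : ℝ) + 1) /
                Gamma ((k : ℝ) + 1 + ((k : ℝ) + 1))) * π ^ (2 * k + 1))) =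
        Real.sqrt π * 2 ^ (k - 1) * Gamma ((k : ℝ) / 2 + 1) ^ 2 / Gamma ((k : ℝ) + 3 / 2) := by
  have hπ := Real.pi_pos
  have hg1 : 0 < Gamma ((k : ℝ) / 2 + 1) := Real.Gamma_pos_of_pos (by positivity)
  have hg2 : 0 < Gamma ((k : ℝ) / 2 + 1 / 2) := Real.Gamma_pos_of_pos (by positivity)
  have hg3 : 0 < Gamma ((k : ℝ) + 1) := Real.Gamma_pos_of_pos (by positivity)
  have hg4 : 0 < Gamma ((k : ℝ) + 1 + ((k : ℝ) + 1)) := Real.Gamma_pos_of_pos (by positivity)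
  have hg5 : 0 < Gamma ((k : ℝ) + 3 / 2) := Real.Gamma_pos_of_pos (by positivity)
  have hsπ : 0 < Real.sqrt π := Real.sqrt_pos.2 hπ
  set C := Gamma ((k : ℝ) / 2 + 1) / (Real.sqrt π * Gamma ((k : ℝ) / 2 + 1 / 2)) with hC
  set E := (Gamma ((k : ℝ) + 1) * Gamma ((k : ℝ) + 1) /
      Gamma ((k : ℝ) + 1 + ((k : ℝ) + 1))) * π ^ (2 * k + 1) with hE
  have hCpos : 0 < C := by rw [hC]; positivity
  have hEpos : 0 < E := by rw [hE]; positivity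
  constructor
  · intro x hx
    obtain ⟨hx0, hxπ⟩ := hx
    have hs0 : 0 ≤ Real.sin x := Real.sin_nonneg_of_nonneg_of_le_pi hx0.le hxπ.le
    have hq : Real.sin x * (π / 2 * (π / 2)) ≤ x * (π - x) := by
      have := sin_le_quad x hx0.le hxπ.le
      nlinarith [this]
    have hpow : (Real.sin x * (π / 2 * (π / 2))) ^ k ≤ (x * (π - x)) ^ k :=
      pow_le_pow_left₀ (by positivity) hq k
    rw [Real.sin_pi_div_two, one_pow, mul_one, show π - π/2 = π/2 by ring]
    have hP : 0 < x ^ k * (π - x) ^ k / E :=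
      div_pos (mul_pos (pow_pos hx0 k) (pow_pos (by linarith) k)) hEpos
    have hQ : 0 < (π/2) ^ k * (π/2) ^ k / E :=
      div_pos (mul_pos (pow_pos (by positivity) k) (pow_pos (by positivity) k)) hEpos
    rw [div_le_div_iff₀ hP hQ]
    have eq1 : C * Real.sin x ^ k * ((π / 2) ^ k * (π / 2) ^ k / E) =
        (C / E) * (Real.sin x * (π / 2 * (π / 2))) ^ k := by
      rw [mul_pow, mul_pow]; ring
    have eq2 : C * (x ^ k * (π - x) ^ k / E) = (C / E) * (x * (π - x)) ^ k := by
      rw [mul_pow]; ring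
    rw [eq1, eq2]
    exact mul_le_mul_of_nonneg_left hpow (by positivity)
  · rw [Real.sin_pi_div_two, one_pow, mul_one, show π - π/2 = π/2 by ring]
    have d1 := Real.Gamma_mul_Gamma_add_half ((k:ℝ) + 1)
    have d2 := Real.Gamma_mul_Gamma_add_half ((k:ℝ)/2 + 1/2)
    rw [show (2:ℝ) ^ ((1:ℝ) - 2*((k:ℝ)+1)) = ((2:ℝ)^(2*k+1))⁻¹ by
        rw [show (1:ℝ) - 2*((k:ℝ)+1) = -((2*k+1 : ℕ):ℝ) by push_cast; ring,
          Real.rpow_neg (by norm_num), Real.rpow_natCast],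
      show (k:ℝ) + 1 + 1/2 = (k:ℝ) + 3/2 by ring,
      show 2*((k:ℝ)+1) = (k:ℝ) + 1 + ((k:ℝ)+1) by ring] at d1
    rw [show (2:ℝ) ^ ((1:ℝ) - 2*((k:ℝ)/2+1/2)) = ((2:ℝ)^k)⁻¹ by
        rw [show (1:ℝ) - 2*((k:ℝ)/2+1/2) = -((k : ℕ):ℝ) by ring,
          Real.rpow_neg (by norm_num), Real.rpow_natCast],
      show (k:ℝ)/2 + 1/2 + 1/2 = (k:ℝ)/2 + 1 by ring,
      show 2*((k:ℝ)/2+1/2) = (k:ℝ)+1 by ring] at d2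
    -- d1 : Γ(k+1) * Γ(k+3/2) = Γ(k+1+(k+1)) * (2^(2k+1))⁻¹ * √π
    -- d2 : Γ(k/2+1/2) * Γ(k/2+1) = Γ(k+1) * (2^k)⁻¹ * √π
    have hg3' : Gamma ((k : ℝ) + 1) =
        Gamma ((k : ℝ)/2 + 1/2) * Gamma ((k : ℝ)/2 + 1) * 2^k / Real.sqrt π := by
      field_simp at d2 ⊢
      linarith [d2]
    have hg4' : Gamma ((k : ℝ) + 1 + ((k : ℝ) + 1)) =
        Gamma ((k : ℝ) + 1) * Gamma ((k : ℝ) + 3/2) * 2^(2*k+1) / Real.sqrt π := by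
      field_simp at d1 ⊢
      linarith [d1]
    obtain ⟨m, rfl⟩ : ∃ m, k = m + 1 := ⟨k - 1, (Nat.succ_pred_eq_of_pos hk).symm⟩
    rw [hC, hE, hg4', hg3']
    set s := Real.sqrt π with hs
    rw [show π = s * s from (Real.mul_self_sqrt hπ.le).symm]
    rw [Nat.add_sub_cancel]
    field_simp
    rw [div_pow, div_pow]
    field_simp
    ring
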